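/- Let ξ : [0,∞) → X be a p-curve of maximal slope for a (p,λ)-convex potential φ (λ > 0) with respect to the strong upper gradient |∂φ|, with inf_X φ > −∞. Then φ(ξ(t)) − inf_X φ ≤ (φ(ξ(t₀)) − inf_X φ)·exp(−q λ^{q/p}(t − t₀)) for all t ≥ t₀ > 0, where q = p/(p−1). -/

import Mathlib

open Filter Topology MeasureTheory
open scoped ENNReal

/-- Exponential decay of the potential along a `p`-curve of maximal slope for a
`(p,λ)`-convex potential `φ` (`λ > 0`) with respect to the strong upper gradient
`|∂φ|`, with `inf_X φ > −∞`:
`φ(ξ(t)) − inf_X φ ≤ (φ(ξ(t₀)) − inf_X φ)·exp(−qλ^{q/p}(t−t₀))` for `t ≥ t₀ > 0`. -/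
theorem stmt_18 {X : Type*} (d : X → X → ℝ)
    -- asymmetric metric space axioms
    (hd_nonneg : ∀ x y, 0 ≤ d x y)
    (hd_eq : ∀ x y, d x y = 0 ↔ x = y)
    (hd_tri : ∀ x y z, d x z ≤ d x y + d y z)
    -- exponents and positive convexity parameter
    (p q lam : ℝ) (hp : 1 < p) (hq : q = p / (p - 1)) (hlam : 0 < lam)
    -- potential: never −∞, with finite infimum minf = inf_X φ
    (φ : X → EReal) (hbot : ∀ x, φ x ≠ ⊥)
    (minf : ℝ) (hminf : (minf : EReal) = ⨅ x : X, φ x)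
    -- the upper gradient |∂φ| along the curve
    (g : X → ℝ≥0∞)
    -- the p-curve of maximal slope ξ on (0,∞); u = φ∘ξ is locally absolutely
    -- continuous with derivative D satisfying −u′ = |∂φ|^q(ξ) a.e.
    (ξ : ℝ → X) (u : ℝ → ℝ)
    (hu : ∀ t : ℝ, 0 < t → (u t : EReal) = φ (ξ t))
    (D : ℝ → ℝ)
    (hDint : ∀ s t : ℝ, 0 < s → s ≤ t → IntervalIntegrable D volume s t)
    (hAC : ∀ s t : ℝ, 0 < s → s ≤ t → u t - u s = ∫ r in s..t, D r)
    (hms : ∀ᵐ r ∂(volume.restrict (Set.Ioi (0:ℝ))),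
      ENNReal.ofReal (-D r) = g (ξ r) ^ q)
    -- the (p,λ)-convexity enters through this inequality:
    -- q·λ^{q/p}·(φ(ξ(r)) − inf_X φ) ≤ |∂φ|^q(ξ(r)) a.e.
    (hkey : ∀ᵐ r ∂(volume.restrict (Set.Ioi (0:ℝ))),
      ENNReal.ofReal (q * lam ^ (q / p) * (u r - minf)) ≤ g (ξ r) ^ q) :
    ∀ t₀ t : ℝ, 0 < t₀ → t₀ ≤ t →
      u t - minf ≤ (u t₀ - minf) * Real.exp (-(q * lam ^ (q / p)) * (t - t₀)) := by
  intro t₀ t ht₀ ht₀t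
  set c : ℝ := q * lam ^ (q / p) with hc
  have hq0 : 0 < q := by rw [hq]; exact div_pos (by linarith) (by linarith)
  have hc0 : 0 < c := by
    have h1 : 0 < lam ^ (q / p) := Real.rpow_pos_of_pos hlam _
    exact mul_pos hq0 h1
  have hv0 : ∀ r : ℝ, 0 < r → 0 ≤ u r - minf := by
    intro r hr
    have h1 : (minf : EReal) ≤ (u r : EReal) := by
      rw [hu r hr, hminf]; exact iInf_le _ _
    have h2 : minf ≤ u r := EReal.coe_le_coe_iff.1 h1
    linarith
  set a : ℝ := t₀ / 2 with hadef
  set b : ℝ := t + 1 with hbdef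
  have ha0 : 0 < a := by positivity
  have hat : a < t₀ := by rw [hadef]; linarith
  have htb : t < b := by rw [hbdef]; linarith
  have hab : a ≤ b := by linarith
  -- the localized derivative function
  have hD1 : Integrable ((Set.Ioo a b).indicator D) := by
    have h1 : IntegrableOn D (Set.Ioc a b) := (hDint a b ha0 hab).1
    have h2 : IntegrableOn D (Set.Ioo a b) := h1.mono_set Set.Ioo_subset_Ioc_self
    exact (integrable_indicator_iff measurableSet_Ioo).2 h2
  have hLeb := (IsUnifLocDoublingMeasure.vitaliFamily (volume : Measure ℝ) 1).ae_tendsto_average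
    hD1.locallyIntegrable
  -- the key a.e. differential inequality on (a, b)
  have E : ∀ᵐ x ∂(volume : Measure ℝ), x ∈ Set.Ioo a b → D x ≤ -c * (u x - minf) := by
    filter_upwards [hLeb, (ae_restrict_iff' measurableSet_Ioi).1 hms,
      (ae_restrict_iff' measurableSet_Ioi).1 hkey] with x hx hms' hkey' hxab
    have hx0 : (0:ℝ) < x := lt_trans ha0 hxab.1
    have hvx : 0 ≤ u x - minf := hv0 x hx0
    rcases hvx.lt_or_eq with hpos | hzero
    · -- u x - minf > 0 : use the convexity inequality
      have h1 : ENNReal.ofReal (c * (u x - minf)) ≤ g (ξ x) ^ q := hkey' (Set.mem_Ioi.2 hx0)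
      rw [← hms' (Set.mem_Ioi.2 hx0)] at h1
      have h2 : 0 < ENNReal.ofReal (c * (u x - minf)) :=
        ENNReal.ofReal_pos.2 (mul_pos hc0 hpos)
      have h3 : 0 < -D x := ENNReal.ofReal_pos.1 (lt_of_lt_of_le h2 h1)
      have h4 : c * (u x - minf) ≤ -D x := (ENNReal.ofReal_le_ofReal_iff h3.le).1 h1
      linarith
    · -- u x - minf = 0 : x is a minimum point, left averages of D are ≤ 0
      have T := hx.comp (Real.tendsto_Icc_vitaliFamily_left x)
      have hev : ∀ᶠ y in 𝓝[<] x, ⨍ z in Set.Icc y x, (Set.Ioo a b).indicator D z ≤ 0 := by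
        filter_upwards [Ioo_mem_nhdsLT_of_mem (⟨hxab.1, le_refl x⟩ : x ∈ Set.Ioc a x)]
          with y hy
        have hya : a < y := hy.1
        have hyx : y < x := hy.2
        have hy0 : 0 < y := lt_trans ha0 hya
        have hIcc : Set.Icc y x ⊆ Set.Ioo a b := fun z hz =>
          ⟨lt_of_lt_of_le hya hz.1, lt_of_le_of_lt hz.2 hxab.2⟩
        have h1 : ∫ z in Set.Icc y x, (Set.Ioo a b).indicator D z = ∫ z in Set.Icc y x, D z :=
          setIntegral_congr_fun measurableSet_Icc fun z hz => Set.indicator_of_mem (hIcc hz) D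
        have h2 : ∫ z in Set.Icc y x, D z = ∫ z in Set.Ioc y x, D z :=
          integral_Icc_eq_integral_Ioc
        have h3 : ∫ z in Set.Ioc y x, D z = ∫ z in y..x, D z :=
          (intervalIntegral.integral_of_le hyx.le).symm
        have h4 : u x - u y = ∫ z in y..x, D z := hAC y x hy0 hyx.le
        have h5 : u x - u y ≤ 0 := by
          have h6 := hv0 y hy0
          linarith
        have h7 : ∫ z in Set.Icc y x, (Set.Ioo a b).indicator D z ≤ 0 := by
          rw [h1, h2, h3, ← h4]; exact h5
        rw [setAverage_eq]
        have h8 : (0:ℝ) ≤ ((volume : Measure ℝ) (Set.Icc y x)).toReal⁻¹ := by positivity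
        calc ((volume : Measure ℝ) (Set.Icc y x)).toReal⁻¹ •
              ∫ z in Set.Icc y x, (Set.Ioo a b).indicator D z
            ≤ ((volume : Measure ℝ) (Set.Icc y x)).toReal⁻¹ • (0:ℝ) :=
              smul_le_smul_of_nonneg_left h7 h8
          _ = 0 := smul_zero _
      have hD0 : (Set.Ioo a b).indicator D x ≤ 0 := le_of_tendsto T hev
      rw [Set.indicator_of_mem hxab] at hD0
      nlinarith
  -- u is nonincreasing on [t₀, t]
  have hmono : ∀ s₁ s₂ : ℝ, t₀ ≤ s₁ → s₁ ≤ s₂ → s₂ ≤ t → u s₂ ≤ u s₁ := by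
    intro s₁ s₂ hs₁ hs₁₂ hs₂
    have hs₁0 : 0 < s₁ := lt_of_lt_of_le ht₀ hs₁
    have hint := hAC s₁ s₂ hs₁0 hs₁₂
    have hae : D ≤ᵐ[(volume : Measure ℝ).restrict (Set.Ioc s₁ s₂)] fun _ => (0:ℝ) := by
      rw [EventuallyLE, ae_restrict_iff' measurableSet_Ioc]
      filter_upwards [E] with r hr hrmem
      have hrab : r ∈ Set.Ioo a b :=
        ⟨lt_of_lt_of_le hat (le_trans hs₁ hrmem.1.le), lt_of_le_of_lt (le_trans hrmem.2 hs₂) htb⟩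
      have h1 := hr hrab
      have h2 : 0 ≤ u r - minf := hv0 r (lt_trans ha0 hrab.1)
      nlinarith
    have h3 : ∫ r in s₁..s₂, D r ≤ 0 := by
      rw [intervalIntegral.integral_of_le hs₁₂]
      calc ∫ r in Set.Ioc s₁ s₂, D r
          ≤ ∫ _r in Set.Ioc s₁ s₂, (0:ℝ) :=
            setIntegral_mono_ae_restrict (hDint s₁ s₂ hs₁0 hs₁₂).1
              (integrableOn_const measure_Ioc_lt_top.ne) hae
        _ = 0 := by simp
    linarith
  -- the key one-step estimate
  have hstep : ∀ s₁ s₂ : ℝ, t₀ ≤ s₁ → s₁ ≤ s₂ → s₂ ≤ t →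
      (u s₂ - minf) * (1 + c * (s₂ - s₁)) ≤ u s₁ - minf := by
    intro s₁ s₂ hs₁ hs₁₂ hs₂
    have hs₁0 : 0 < s₁ := lt_of_lt_of_le ht₀ hs₁
    have hint := hAC s₁ s₂ hs₁0 hs₁₂
    have hae : D ≤ᵐ[(volume : Measure ℝ).restrict (Set.Ioc s₁ s₂)]
        fun _ => -c * (u s₂ - minf) := by
      rw [EventuallyLE, ae_restrict_iff' measurableSet_Ioc]
      filter_upwards [E] with r hr hrmem
      have hrab : r ∈ Set.Ioo a b :=
        ⟨lt_of_lt_of_le hat (le_trans hs₁ hrmem.1.le), lt_of_le_of_lt (le_trans hrmem.2 hs₂) htb⟩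
      have h1 := hr hrab
      have h2 : u s₂ ≤ u r := hmono r s₂ (le_trans hs₁ hrmem.1.le) hrmem.2 hs₂
      nlinarith
    have h3 : ∫ r in s₁..s₂, D r ≤ -c * (u s₂ - minf) * (s₂ - s₁) := by
      rw [intervalIntegral.integral_of_le hs₁₂]
      calc ∫ r in Set.Ioc s₁ s₂, D r
          ≤ ∫ _r in Set.Ioc s₁ s₂, (-c * (u s₂ - minf)) :=
            setIntegral_mono_ae_restrict (hDint s₁ s₂ hs₁0 hs₁₂).1
              (integrableOn_const measure_Ioc_lt_top.ne) hae
        _ = ((volume : Measure ℝ) (Set.Ioc s₁ s₂)).toReal • (-c * (u s₂ - minf)) :=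
            setIntegral_const _
        _ = -c * (u s₂ - minf) * (s₂ - s₁) := by
            rw [Real.volume_Ioc, ENNReal.toReal_ofReal (by linarith)]
            rw [smul_eq_mul]; ring
    nlinarith
  -- discrete iteration
  have key : ∀ n : ℕ, 0 < n → (u t - minf) * (1 + c * ((t - t₀) / n)) ^ n ≤ u t₀ - minf := by
    intro n hn
    set h : ℝ := (t - t₀) / n with hhdef
    have hn0 : (n:ℝ) ≠ 0 := Nat.cast_ne_zero.2 hn.ne'
    have hh0 : 0 ≤ h := div_nonneg (by linarith) (Nat.cast_nonneg n)
    have hch : 0 ≤ 1 + c * h := by nlinarith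
    have hnh : (n:ℝ) * h = t - t₀ := by rw [hhdef]; field_simp
    have main : ∀ k : ℕ, k ≤ n → (u (t₀ + k * h) - minf) * (1 + c * h) ^ k ≤ u t₀ - minf := by
      intro k
      induction k with
      | zero => intro _; simp
      | succ k ih =>
        intro hkn
        have ihk := ih (Nat.le_of_succ_le hkn)
        have hkh : 0 ≤ (k:ℝ) * h := mul_nonneg (Nat.cast_nonneg k) hh0
        have hk1 : ((k:ℝ) + 1) ≤ (n:ℝ) := by exact_mod_cast hkn
        have hle : t₀ + ((k:ℝ) + 1) * h ≤ t := by
          have h1 : ((k:ℝ) + 1) * h ≤ (n:ℝ) * h := mul_le_mul_of_nonneg_right hk1 hh0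
          linarith
        have h12 : t₀ + (k:ℝ) * h ≤ t₀ + ((k:ℝ) + 1) * h := by nlinarith
        have hs := hstep (t₀ + (k:ℝ) * h) (t₀ + ((k:ℝ) + 1) * h) (by linarith) h12 hle
        have hcast : ((k + 1 : ℕ) : ℝ) = (k:ℝ) + 1 := by push_cast; ring
        rw [hcast]
        calc (u (t₀ + ((k:ℝ) + 1) * h) - minf) * (1 + c * h) ^ (k + 1)
            = ((u (t₀ + ((k:ℝ) + 1) * h) - minf) * (1 + c * h)) * (1 + c * h) ^ k := by ring
          _ ≤ (u (t₀ + (k:ℝ) * h) - minf) * (1 + c * h) ^ k := by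
              have hs' : (u (t₀ + ((k:ℝ) + 1) * h) - minf) * (1 + c * h) ≤
                  u (t₀ + (k:ℝ) * h) - minf := by
                have : t₀ + ((k:ℝ) + 1) * h - (t₀ + (k:ℝ) * h) = h := by ring
                rw [this] at hs; exact hs
              exact mul_le_mul_of_nonneg_right hs' (pow_nonneg hch k)
          _ ≤ u t₀ - minf := ihk
    have hfin := main n le_rfl
    have ht' : t₀ + (n:ℝ) * h = t := by linarith
    rw [ht'] at hfin
    exact hfin
  -- pass to the limit
  have hlim : Tendsto (fun n : ℕ => (u t₀ - minf) / (1 + c * (t - t₀) / n) ^ n) atTop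
      (𝓝 ((u t₀ - minf) / Real.exp (c * (t - t₀)))) :=
    tendsto_const_nhds.div (Real.tendsto_one_add_div_pow_exp (c * (t - t₀))) (Real.exp_ne_zero _)
  have hfin : ∀ᶠ n : ℕ in atTop,
      u t - minf ≤ (u t₀ - minf) / (1 + c * (t - t₀) / n) ^ n := by
    filter_upwards [eventually_gt_atTop 0] with n hn
    have hn0 : (n:ℝ) ≠ 0 := Nat.cast_ne_zero.2 hn.ne'
    have hh0 : 0 ≤ (t - t₀) / n := div_nonneg (by linarith) (Nat.cast_nonneg n)
    have hpos : 0 < (1 + c * ((t - t₀) / n)) ^ n := pow_pos (by nlinarith) n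
    have h1 := key n hn
    rw [mul_div_assoc]
    rw [le_div_iff₀ hpos]
    exact h1
  have hle : u t - minf ≤ (u t₀ - minf) / Real.exp (c * (t - t₀)) := ge_of_tendsto hlim hfin
  rw [neg_mul, Real.exp_neg, ← div_eq_mul_inv]
  exact hle
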